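/- Let n ≥ 3 be an integer divisible by 3. The rotation ρ : ℂ → ℂ, ρ(z) = e^{2πi/3}·z, maps the line L_j onto the line L_{(j + n/3) mod n} for every 0 ≤ j ≤ n−1, and complex conjugation z ↦ conj(z) maps L_j onto L_{(n−j) mod n}. Consequently every element of G maps the set of lines {L_0, …, L_{n−1}} onto itself and maps the set ℬ_n of triple points bijectively onto itself, so G acts on ℬ_n. -/

import Mathlib

open Complex

/-- `P n j = exp(2πij/n)`. -/
noncomputable def Ppt (n j : ℕ) : ℂ := Complex.exp (2 * Real.pi * Complex.I * j / n)

/-- `Q n j = -exp(-4πij/n)`. -/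
noncomputable def Qpt (n j : ℕ) : ℂ := -Complex.exp (-(4 * Real.pi * Complex.I * j) / n)

open scoped Classical in
/-- The `j`-th line of the Böröczky configuration: the line through `P n j` and
`Q n j` if they are distinct, and the tangent line to the unit circle at `P n j`
otherwise (identifying ℝ² with ℂ). -/
noncomputable def Bline (n j : ℕ) : Set ℂ :=
  if Ppt n j = Qpt n j then
    {z : ℂ | (z * (starRingEnd ℂ) (Ppt n j)).re = 1}
  else
    {z : ℂ | ((z - Ppt n j) * (starRingEnd ℂ) (Qpt n j - Ppt n j)).im = 0}

/-- The set of triple points of the Böröczky configuration: points lying on at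
least three of the lines `L_0, …, L_{n-1}`. -/
def TriplePts (n : ℕ) : Set ℂ :=
  {z : ℂ | 3 ≤ ({j : ℕ | j < n ∧ z ∈ Bline n j} : Set ℕ).ncard}

noncomputable def rotPerm : Equiv.Perm ℂ :=
  Equiv.mulLeft₀ (Complex.exp (2 * Real.pi * Complex.I / 3)) (Complex.exp_ne_zero _)

noncomputable def conjPerm : Equiv.Perm ℂ :=
  ⟨fun z => (starRingEnd ℂ) z, fun z => (starRingEnd ℂ) z,
    fun z => by simp, fun z => by simp⟩

noncomputable def dihedralG : Subgroup (Equiv.Perm ℂ) :=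
  Subgroup.closure {rotPerm, conjPerm}

def Gorbit (v : ℂ) : Set ℂ := {z : ℂ | ∃ g ∈ dihedralG, g v = z}

/-! ### Auxiliary lemmas -/

lemma exp_two_pi_int (m : ℤ) : Complex.exp (2 * Real.pi * Complex.I * m) = 1 := by
  have h := Complex.exp_int_mul_two_pi_mul_I m
  rw [← h]; ring_nf

lemma Ppt_add_mul (n k q : ℕ) (hn : n ≠ 0) : Ppt n (k + n * q) = Ppt n k := by
  have hne : (n : ℂ) ≠ 0 := Nat.cast_ne_zero.mpr hn
  unfold Ppt
  have h : 2 * (Real.pi : ℂ) * Complex.I * (↑(k + n * q)) / n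
      = 2 * Real.pi * Complex.I * k / n + 2 * Real.pi * Complex.I * (q : ℤ) := by
    push_cast
    field_simp
  rw [h, Complex.exp_add, exp_two_pi_int, mul_one]

lemma Qpt_add_mul (n k q : ℕ) (hn : n ≠ 0) : Qpt n (k + n * q) = Qpt n k := by
  have hne : (n : ℂ) ≠ 0 := Nat.cast_ne_zero.mpr hn
  unfold Qpt
  have h : -(4 * (Real.pi : ℂ) * Complex.I * (↑(k + n * q))) / n
      = -(4 * Real.pi * Complex.I * k) / n
        + 2 * Real.pi * Complex.I * ((-2 * (q : ℤ) : ℤ) : ℂ) := by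
    push_cast
    field_simp
    ring
  rw [h, Complex.exp_add, exp_two_pi_int, mul_one]

lemma Ppt_mod (n k : ℕ) (hn : n ≠ 0) : Ppt n (k % n) = Ppt n k := by
  conv_rhs => rw [← Nat.mod_add_div k n]
  rw [Ppt_add_mul n _ _ hn]

lemma Qpt_mod (n k : ℕ) (hn : n ≠ 0) : Qpt n (k % n) = Qpt n k := by
  conv_rhs => rw [← Nat.mod_add_div k n]
  rw [Qpt_add_mul n _ _ hn]

lemma cast_n_div_3 {n : ℕ} (hdvd : 3 ∣ n) : ((n / 3 : ℕ) : ℂ) = (n : ℂ) / 3 := by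
  obtain ⟨m, rfl⟩ := hdvd
  rw [Nat.mul_div_cancel_left m (by norm_num)]
  push_cast
  ring

lemma Ppt_rot (n j : ℕ) (hn : 3 ≤ n) (hdvd : 3 ∣ n) :
    Ppt n (j + n / 3) = Complex.exp (2 * Real.pi * Complex.I / 3) * Ppt n j := by
  have hne : (n : ℂ) ≠ 0 := Nat.cast_ne_zero.mpr (by omega)
  unfold Ppt
  rw [← Complex.exp_add]
  congr 1
  push_cast
  rw [cast_n_div_3 hdvd]
  field_simp
  ring

lemma Qpt_rot (n j : ℕ) (hn : 3 ≤ n) (hdvd : 3 ∣ n) :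
    Qpt n (j + n / 3) = Complex.exp (2 * Real.pi * Complex.I / 3) * Qpt n j := by
  have hne : (n : ℂ) ≠ 0 := Nat.cast_ne_zero.mpr (by omega)
  unfold Qpt
  have h : -(4 * (Real.pi : ℂ) * Complex.I * (↑(j + n / 3))) / n
      = (2 * Real.pi * Complex.I / 3 + 2 * Real.pi * Complex.I * ((-1 : ℤ)))
        + -(4 * Real.pi * Complex.I * j) / n := by
    push_cast
    rw [cast_n_div_3 hdvd]
    field_simp
    ring
  rw [h, Complex.exp_add, Complex.exp_add, exp_two_pi_int, mul_one]
  ring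

lemma Ppt_conj (n j : ℕ) (hn : n ≠ 0) (hj : j ≤ n) :
    (starRingEnd ℂ) (Ppt n j) = Ppt n (n - j) := by
  have hne : (n : ℂ) ≠ 0 := Nat.cast_ne_zero.mpr hn
  unfold Ppt
  rw [← Complex.exp_conj]
  have h : (starRingEnd ℂ) (2 * (Real.pi : ℂ) * Complex.I * j / n)
      = -(2 * Real.pi * Complex.I * j / n) := by
    simp [map_div₀, map_ofNat]
    ring
  have h2 : 2 * (Real.pi : ℂ) * Complex.I * (↑(n - j)) / n
      = 2 * Real.pi * Complex.I * ((1 : ℤ)) + -(2 * Real.pi * Complex.I * j / n) := by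
    rw [Nat.cast_sub hj]
    field_simp
    ring
  rw [h, h2, Complex.exp_add, exp_two_pi_int, one_mul]

lemma Qpt_conj (n j : ℕ) (hn : n ≠ 0) (hj : j ≤ n) :
    (starRingEnd ℂ) (Qpt n j) = Qpt n (n - j) := by
  have hne : (n : ℂ) ≠ 0 := Nat.cast_ne_zero.mpr hn
  unfold Qpt
  rw [map_neg, ← Complex.exp_conj]
  have h : (starRingEnd ℂ) (-(4 * (Real.pi : ℂ) * Complex.I * j) / n)
      = 4 * Real.pi * Complex.I * j / n := by
    simp [map_div₀, map_ofNat]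
  have h2 : -(4 * (Real.pi : ℂ) * Complex.I * (↑(n - j))) / n
      = 2 * Real.pi * Complex.I * ((-2 : ℤ)) + 4 * Real.pi * Complex.I * j / n := by
    rw [Nat.cast_sub hj]
    field_simp
    ring
  rw [h, h2, Complex.exp_add, exp_two_pi_int, one_mul]

/-- Membership criterion transported through multiplication by a unimodular number. -/
lemma Bline_image_of_mul {n j k : ℕ} {ω : ℂ} (hω : ω * (starRingEnd ℂ) ω = 1)
    (hP : Ppt n k = ω * Ppt n j) (hQ : Qpt n k = ω * Qpt n j) :
    (fun z : ℂ => ω * z) '' Bline n j = Bline n k := by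
  classical
  have hω0 : ω ≠ 0 := by rintro rfl; simp at hω
  have key : ∀ z : ℂ, z ∈ Bline n j ↔ ω * z ∈ Bline n k := by
    intro z
    have hPQ : (Ppt n k = Qpt n k) ↔ (Ppt n j = Qpt n j) := by
      rw [hP, hQ, mul_right_inj' hω0]
    unfold Bline
    by_cases h : Ppt n j = Qpt n j
    · rw [if_pos h, if_pos (hPQ.mpr h)]
      have e : ω * z * (starRingEnd ℂ) (Ppt n k)
          = z * (starRingEnd ℂ) (Ppt n j) * (ω * (starRingEnd ℂ) ω) := by
        rw [hP, map_mul]; ring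
      simp only [Set.mem_setOf_eq, e, hω, mul_one]
    · rw [if_neg h, if_neg (fun hc => h (hPQ.mp hc))]
      have e : (ω * z - Ppt n k) * (starRingEnd ℂ) (Qpt n k - Ppt n k)
          = (z - Ppt n j) * (starRingEnd ℂ) (Qpt n j - Ppt n j)
            * (ω * (starRingEnd ℂ) ω) := by
        rw [hP, hQ, ← mul_sub, ← mul_sub, map_mul]; ring
      simp only [Set.mem_setOf_eq, e, hω, mul_one]
  ext w
  constructor
  · rintro ⟨z, hz, rfl⟩
    exact (key z).mp hz
  · intro hw
    refine ⟨ω⁻¹ * w, (key _).mpr ?_, ?_⟩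
    · rwa [show ω * (ω⁻¹ * w) = w by field_simp]
    · show ω * (ω⁻¹ * w) = w; field_simp

/-- Membership criterion transported through complex conjugation. -/
lemma Bline_image_of_conj {n j k : ℕ}
    (hP : Ppt n k = (starRingEnd ℂ) (Ppt n j)) (hQ : Qpt n k = (starRingEnd ℂ) (Qpt n j)) :
    (fun z : ℂ => (starRingEnd ℂ) z) '' Bline n j = Bline n k := by
  classical
  have key : ∀ z : ℂ, z ∈ Bline n j ↔ (starRingEnd ℂ) z ∈ Bline n k := by
    intro z
    have hPQ : (Ppt n k = Qpt n k) ↔ (Ppt n j = Qpt n j) := by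
      rw [hP, hQ]
      exact ⟨fun h => by simpa using congrArg (starRingEnd ℂ) h, fun h => by rw [h]⟩
    unfold Bline
    by_cases h : Ppt n j = Qpt n j
    · rw [if_pos h, if_pos (hPQ.mpr h)]
      have e : (starRingEnd ℂ) z * (starRingEnd ℂ) (Ppt n k)
          = (starRingEnd ℂ) (z * (starRingEnd ℂ) (Ppt n j)) := by
        rw [hP, map_mul]
      simp only [Set.mem_setOf_eq, e, Complex.conj_re]
    · rw [if_neg h, if_neg (fun hc => h (hPQ.mp hc))]
      have e : ((starRingEnd ℂ) z - Ppt n k) * (starRingEnd ℂ) (Qpt n k - Ppt n k)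
          = (starRingEnd ℂ) ((z - Ppt n j) * (starRingEnd ℂ) (Qpt n j - Ppt n j)) := by
        rw [hP, hQ]
        simp only [map_mul, map_sub, Complex.conj_conj]
      simp only [Set.mem_setOf_eq, e, Complex.conj_im, neg_eq_zero]
  ext w
  constructor
  · rintro ⟨z, hz, rfl⟩
    exact (key z).mp hz
  · intro hw
    refine ⟨(starRingEnd ℂ) w, (key _).mpr ?_, ?_⟩
    · rwa [Complex.conj_conj]
    · show (starRingEnd ℂ) ((starRingEnd ℂ) w) = w; rw [Complex.conj_conj]

lemma omega_conj : Complex.exp (2 * Real.pi * Complex.I / 3)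
    * (starRingEnd ℂ) (Complex.exp (2 * Real.pi * Complex.I / 3)) = 1 := by
  rw [← Complex.exp_conj, ← Complex.exp_add]
  have h : (starRingEnd ℂ) (2 * (Real.pi : ℂ) * Complex.I / 3)
      = -(2 * Real.pi * Complex.I / 3) := by
    simp [map_div₀, map_ofNat]
    ring
  rw [h, add_neg_cancel, Complex.exp_zero]

lemma rot_image (n : ℕ) (hn : 3 ≤ n) (hdvd : 3 ∣ n) (j : ℕ) :
    (fun z : ℂ => Complex.exp (2 * Real.pi * Complex.I / 3) * z) '' Bline n j =
      Bline n ((j + n / 3) % n) := by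
  have hn0 : n ≠ 0 := by omega
  refine Bline_image_of_mul omega_conj ?_ ?_
  · rw [Ppt_mod n _ hn0, Ppt_rot n j hn hdvd]
  · rw [Qpt_mod n _ hn0, Qpt_rot n j hn hdvd]

lemma conj_image (n : ℕ) (hn : 3 ≤ n) (j : ℕ) (hj : j ≤ n) :
    (fun z : ℂ => (starRingEnd ℂ) z) '' Bline n j = Bline n ((n - j) % n) := by
  have hn0 : n ≠ 0 := by omega
  refine Bline_image_of_conj ?_ ?_
  · rw [Ppt_mod n _ hn0, ← Ppt_conj n j hn0 hj]
  · rw [Qpt_mod n _ hn0, ← Qpt_conj n j hn0 hj]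

/-- If `g` permutes the lines according to a permutation of indices, then the image of
the set of triple points is contained in the set of triple points. -/
lemma triple_subset {n : ℕ} (g : Equiv.Perm ℂ) (σ : Equiv.Perm (Fin n))
    (h : ∀ j : Fin n, ⇑g '' Bline n j = Bline n (σ j)) :
    ⇑g '' TriplePts n ⊆ TriplePts n := by
  rintro _ ⟨z, hz, rfl⟩
  have hSfin : ({k : ℕ | k < n ∧ g z ∈ Bline n k} : Set ℕ).Finite :=
    (Set.finite_Iio n).subset (fun k hk => hk.1)
  set S : Set ℕ := {j : ℕ | j < n ∧ z ∈ Bline n j} with hS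
  set T : Set ℕ := {k : ℕ | k < n ∧ g z ∈ Bline n k} with hT
  let f : ℕ → ℕ := fun j => if hj : j < n then (σ ⟨j, hj⟩ : ℕ) else 0
  have hmaps : f '' S ⊆ T := by
    rintro _ ⟨j, ⟨hjn, hjz⟩, rfl⟩
    have : g z ∈ ⇑g '' Bline n j := ⟨z, hjz, rfl⟩
    rw [show (j : ℕ) = ((⟨j, hjn⟩ : Fin n) : ℕ) from rfl, h ⟨j, hjn⟩] at this
    simp only [f, dif_pos hjn]
    exact ⟨(σ ⟨j, hjn⟩).isLt, this⟩
  have hinj : Set.InjOn f S := by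
    intro a ha b hb hab
    simp only [f, dif_pos ha.1, dif_pos hb.1] at hab
    have h2 := σ.injective (Fin.val_injective hab)
    exact congrArg Fin.val h2
  have h1 : S.ncard = (f '' S).ncard := (Set.ncard_image_of_injOn hinj).symm
  have h2 : (f '' S).ncard ≤ T.ncard := Set.ncard_le_ncard hmaps hSfin
  exact le_trans (le_trans hz (le_of_eq h1)) h2

/-- The permutation property, closed under the group operations. -/
def PermProp (n : ℕ) (g : Equiv.Perm ℂ) : Prop :=
  ∃ σ : Equiv.Perm (Fin n), ∀ j : Fin n, ⇑g '' Bline n j = Bline n (σ j)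

lemma PermProp.one (n : ℕ) : PermProp n 1 :=
  ⟨1, fun j => by simp⟩

lemma PermProp.mul {n : ℕ} {g h : Equiv.Perm ℂ} (hg : PermProp n g) (hh : PermProp n h) :
    PermProp n (g * h) := by
  obtain ⟨σ, hσ⟩ := hg
  obtain ⟨τ, hτ⟩ := hh
  refine ⟨σ * τ, fun j => ?_⟩
  rw [Equiv.Perm.coe_mul, Set.image_comp, hτ j, hσ (τ j), Equiv.Perm.mul_apply]

lemma PermProp.inv {n : ℕ} {g : Equiv.Perm ℂ} (hg : PermProp n g) : PermProp n g⁻¹ := by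
  obtain ⟨σ, hσ⟩ := hg
  refine ⟨σ⁻¹, fun j => ?_⟩
  have h1 : ⇑g '' Bline n (σ⁻¹ j) = Bline n j := by
    rw [hσ (σ⁻¹ j), ← Equiv.Perm.mul_apply, mul_inv_cancel, Equiv.Perm.one_apply]
  rw [← h1, ← Set.image_comp]
  have : (⇑g⁻¹ ∘ ⇑g) = id := by
    funext x; simp
  rw [this, Set.image_id]

lemma permProp_implies {n : ℕ} (g : Equiv.Perm ℂ) (hg : PermProp n g) :
    (∀ j, j < n → ∃ k, k < n ∧ ⇑g '' Bline n j = Bline n k) ∧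
      ⇑g '' TriplePts n = TriplePts n := by
  obtain ⟨σ, hσ⟩ := hg
  constructor
  · intro j hj
    exact ⟨(σ ⟨j, hj⟩ : ℕ), (σ ⟨j, hj⟩).isLt, hσ ⟨j, hj⟩⟩
  · obtain ⟨τ, hτ⟩ := PermProp.inv ⟨σ, hσ⟩
    apply Set.Subset.antisymm
    · exact triple_subset g σ hσ
    · intro z hz
      have hz' : g⁻¹ z ∈ TriplePts n := triple_subset g⁻¹ τ hτ ⟨z, hz, rfl⟩
      exact ⟨g⁻¹ z, hz', by simp⟩

/-- For `3 ∣ n`, the rotation by `2π/3` maps `L_j` onto `L_{(j + n/3) % n}`,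
complex conjugation maps `L_j` onto `L_{(n - j) % n}`, and consequently every
element of the dihedral group `G` permutes the configuration lines and maps the
set of triple points bijectively onto itself. -/
theorem boroczky_dihedral_action (n : ℕ) (hn : 3 ≤ n) (hdvd : 3 ∣ n) :
    (∀ j, j < n →
      (fun z : ℂ => Complex.exp (2 * Real.pi * Complex.I / 3) * z) '' Bline n j =
        Bline n ((j + n / 3) % n)) ∧
    (∀ j, j < n →
      (fun z : ℂ => (starRingEnd ℂ) z) '' Bline n j = Bline n ((n - j) % n)) ∧
    (∀ g ∈ dihedralG,
      (∀ j, j < n → ∃ k, k < n ∧ ⇑g '' Bline n j = Bline n k) ∧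
      ⇑g '' TriplePts n = TriplePts n) := by
  haveI : NeZero n := ⟨by omega⟩
  refine ⟨fun j _ => rot_image n hn hdvd j, fun j hj => conj_image n hn j hj.le, ?_⟩
  intro g hg
  have hrot : PermProp n rotPerm := by
    refine ⟨Equiv.addRight ⟨n / 3, Nat.div_lt_self (by omega) (by norm_num)⟩, fun j => ?_⟩
    have hc : ⇑rotPerm = fun z : ℂ => Complex.exp (2 * Real.pi * Complex.I / 3) * z := by
      funext z; simp [rotPerm]
    have hval : ((Equiv.addRight (⟨n / 3, Nat.div_lt_self (by omega) (by norm_num)⟩ : Fin n)) j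
        : ℕ) = ((j : ℕ) + n / 3) % n := by
      simp only [Equiv.coe_addRight]
      rw [Fin.add_def]
    rw [hc, hval]
    exact rot_image n hn hdvd j
  have hconj : PermProp n conjPerm := by
    refine ⟨Equiv.neg (Fin n), fun j => ?_⟩
    have hc : ⇑conjPerm = fun z : ℂ => (starRingEnd ℂ) z := rfl
    have hval : ((Equiv.neg (Fin n)) j : ℕ) = (n - (j : ℕ)) % n := by
      simp only [Equiv.neg_apply]
      rw [Fin.neg_def]
    rw [hc, hval]
    exact conj_image n hn j j.isLt.le
  have hmain : PermProp n g := by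
    refine Subgroup.closure_induction (k := {rotPerm, conjPerm})
      (p := fun x _ => PermProp n x) ?_ (PermProp.one n)
      (fun x y _ _ hx hy => PermProp.mul hx hy) (fun x _ hx => PermProp.inv hx) hg
    rintro x (rfl | rfl)
    · exact hrot
    · exact hconj
  exact permProp_implies g hmain
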